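/- arXiv:1802.05558 — 2 statements merged into one kernel-verified Lean document; each statement's English description precedes it below -/
import Mathlib

section
/- A linear map Φ : M_m(ℂ) → M_n(ℂ) is decomposable if and only if Tr(ρ·C_Φ) ≥ 0 for every PPT matrix ρ ∈ M_m(ℂ)⊗M_n(ℂ). -/
open Matrix
open scoped ComplexOrder

noncomputable section

/-- A map between complex matrix algebras is positive if it maps positive semidefinite
matrices to positive semidefinite matrices. -/
def IsPosMap {m n : ℕ} (Φ : Matrix (Fin m) (Fin m) ℂ → Matrix (Fin n) (Fin n) ℂ) : Prop :=
  ∀ X, X.PosSemidef → (Φ X).PosSemidef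

/-- Blockwise application of a map `Φ : M_m → M_n` to a matrix in `M_k(M_m)`:
`Φ_k (X_{ij}) = (Φ(X_{ij}))`. -/
def blockApply {m n : ℕ} (k : ℕ)
    (Φ : Matrix (Fin m) (Fin m) ℂ → Matrix (Fin n) (Fin n) ℂ)
    (X : Matrix (Fin k × Fin m) (Fin k × Fin m) ℂ) :
    Matrix (Fin k × Fin n) (Fin k × Fin n) ℂ :=
  Matrix.of fun p q => Φ (Matrix.of fun i j => X (p.1, i) (q.1, j)) p.2 q.2

/-- `Φ` is completely positive if it is `k`-positive for every `k`, i.e. the blockwise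
application of `Φ` to `M_k(M_m)` is a positive map for every `k`. -/
def IsCompletelyPositive {m n : ℕ}
    (Φ : Matrix (Fin m) (Fin m) ℂ → Matrix (Fin n) (Fin n) ℂ) : Prop :=
  ∀ k : ℕ, ∀ X : Matrix (Fin k × Fin m) (Fin k × Fin m) ℂ,
    X.PosSemidef → (blockApply k Φ X).PosSemidef

/-- `Φ` is decomposable if it is the sum of a completely positive linear map and a
completely copositive linear map. -/
def IsDecomposable {m n : ℕ}
    (Φ : Matrix (Fin m) (Fin m) ℂ → Matrix (Fin n) (Fin n) ℂ) : Prop :=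
  ∃ Φ₁ Φ₂ : Matrix (Fin m) (Fin m) ℂ → Matrix (Fin n) (Fin n) ℂ,
    IsLinearMap ℂ Φ₁ ∧ IsLinearMap ℂ Φ₂ ∧
    IsCompletelyPositive Φ₁ ∧ IsCompletelyPositive (fun X => (Φ₂ X)ᵀ) ∧
    ∀ X, Φ X = Φ₁ X + Φ₂ X

/-- The Choi matrix of `Φ`: `C_Φ = (Φ(E_{ij}))_{i,j}` as an element of `M_m ⊗ M_n`. -/
def choiMatrix {m n : ℕ} (Φ : Matrix (Fin m) (Fin m) ℂ → Matrix (Fin n) (Fin n) ℂ) :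
    Matrix (Fin m × Fin n) (Fin m × Fin n) ℂ :=
  Matrix.of fun p q => Φ (Matrix.single p.1 q.1 1) p.2 q.2

/-- The simple tensor `ξ ⊗ η` of two vectors. -/
def tensorVec {m n : ℕ} (ξ : Fin m → ℂ) (η : Fin n → ℂ) : Fin m × Fin n → ℂ :=
  fun p => ξ p.1 * η p.2

/-- The partial transposition `(id ⊗ transpose)` on `M_m ⊗ M_n`. -/
def partialTranspose {m n : ℕ} (ρ : Matrix (Fin m × Fin n) (Fin m × Fin n) ℂ) :
    Matrix (Fin m × Fin n) (Fin m × Fin n) ℂ :=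
  Matrix.of fun p q => ρ (p.1, q.2) (q.1, p.2)

/-- The Choi-like map `Φ_A` associated to a matrix `A` of coefficients: the `i`-th diagonal
entry of `Φ_A(X)` is `∑ k, A i k * x_{kk}` and the off-diagonal entries are `-x_{ij}`. -/
def PhiMap {n : ℕ} (A : Matrix (Fin n) (Fin n) ℝ) (X : Matrix (Fin n) (Fin n) ℂ) :
    Matrix (Fin n) (Fin n) ℂ :=
  Matrix.of fun i j => if i = j then ∑ k, (A i k : ℂ) * X k k else -X i j

/-- The generalized Choi map `Φ_{[a,b,c]}` of Cho, Kye and Lee. -/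
def genChoiMap (a b c : ℝ) : Matrix (Fin 3) (Fin 3) ℂ → Matrix (Fin 3) (Fin 3) ℂ :=
  PhiMap !![a, b, c; c, a, b; b, c, a]

/-- Kye's map `Φ_{[a; c₁, c₂, c₃]}`. -/
def kyeMap (a c₁ c₂ c₃ : ℝ) : Matrix (Fin 3) (Fin 3) ℂ → Matrix (Fin 3) (Fin 3) ℂ :=
  PhiMap !![a, 0, c₁; c₂, a, 0; 0, c₃, a]

/-- The diagonal map `Δ_A(X) = diag(∑_j (a_{ij} + δ_{ij}) x_{jj})_i`. -/
def DeltaMap {n : ℕ} (A : Matrix (Fin n) (Fin n) ℝ) (X : Matrix (Fin n) (Fin n) ℂ) :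
    Matrix (Fin n) (Fin n) ℂ :=
  Matrix.diagonal (fun i => ∑ j, ((A i j : ℂ) + if i = j then 1 else 0) * X j j)

/-- The map `Φ_A(X) = Δ_A(X) - X`. -/
def PhiDelta {n : ℕ} (A : Matrix (Fin n) (Fin n) ℝ) (X : Matrix (Fin n) (Fin n) ℂ) :
    Matrix (Fin n) (Fin n) ℂ :=
  DeltaMap A X - X

section Helpers
variable {d : Type*} [Fintype d] [DecidableEq d]

lemma star_single_c (k : d) (c : ℂ) :
    star (Pi.single k c : d → ℂ) = Pi.single k ((starRingEnd ℂ) c) := by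
  funext t
  simp only [Pi.star_apply, Pi.single_apply]
  split <;> simp

lemma quad_single_single (M : Matrix d d ℂ) (i j : d) (a b : ℂ) :
    star (Pi.single i a + Pi.single j b) ⬝ᵥ M *ᵥ (Pi.single i a + Pi.single j b)
      = (starRingEnd ℂ) a * M i i * a + (starRingEnd ℂ) a * M i j * b
        + (starRingEnd ℂ) b * M j i * a + (starRingEnd ℂ) b * M j j * b := by
  simp only [star_add, star_single_c, Matrix.mulVec_add, dotProduct_add,
    add_dotProduct, Matrix.mulVec_single, single_dotProduct, Pi.add_apply, Pi.smul_apply,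
    op_smul_eq_mul, Matrix.col_apply]
  ring

lemma quadform_eq_zero {M : Matrix d d ℂ} (h : ∀ y : d → ℂ, star y ⬝ᵥ M *ᵥ y = 0) :
    M = 0 := by
  have hdiag : ∀ i : d, M i i = 0 := by
    intro i
    have := h (Pi.single i 1 + Pi.single i 0)
    rw [quad_single_single] at this
    simpa using this
  have key : ∀ (i j : d) (c : ℂ), M i j * c + (starRingEnd ℂ) c * M j i = 0 := by
    intro i j c
    have := h (Pi.single i 1 + Pi.single j c)
    rw [quad_single_single, hdiag, hdiag] at this
    simpa [mul_comm] using this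
  ext i j
  have h1 : M i j + M j i = 0 := by simpa using key i j 1
  have h2 : M i j * Complex.I + -Complex.I * M j i = 0 := by
    simpa [Complex.conj_I] using key i j Complex.I
  have h3 : M i j - M j i = 0 := by
    have hI : Complex.I * (M i j - M j i) = 0 := by linear_combination h2
    rcases mul_eq_zero.mp hI with h | h
    · exact absurd h Complex.I_ne_zero
    · exact h
  show M i j = 0
  linear_combination (h1 + h3) / 2

omit [DecidableEq d] in
lemma trace_mul_eq_sum (A B : Matrix d d ℂ) :
    (A * B).trace = ∑ p, ∑ q, A p q * B q p := by
  simp [Matrix.trace, Matrix.mul_apply, Matrix.diag]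

omit [DecidableEq d] in
lemma dot_mulVec_sum (A : Matrix d d ℂ) (v : d → ℂ) :
    star v ⬝ᵥ A *ᵥ v = ∑ p, ∑ q, (starRingEnd ℂ) (v p) * (A p q * v q) := by
  simp [dotProduct, Matrix.mulVec, Finset.mul_sum]

omit [DecidableEq d] in
lemma trace_outer_left (v : d → ℂ) (C : Matrix d d ℂ) :
    (Matrix.vecMulVec v (star v) * C).trace = star v ⬝ᵥ C *ᵥ v := by
  rw [trace_mul_eq_sum, dot_mulVec_sum, Finset.sum_comm]
  apply Finset.sum_congr rfl; intro q _
  apply Finset.sum_congr rfl; intro p _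
  simp only [Matrix.vecMulVec_apply, Pi.star_apply, starRingEnd_apply]
  ring

omit [DecidableEq d] in
lemma trace_conjTranspose_outer (N : Matrix d d ℂ) (v : d → ℂ) :
    (Nᴴ * Matrix.vecMulVec v (star v)).trace = (starRingEnd ℂ) (star v ⬝ᵥ N *ᵥ v) := by
  rw [trace_mul_eq_sum, dot_mulVec_sum, map_sum, Finset.sum_comm]
  apply Finset.sum_congr rfl; intro p _
  rw [map_sum]
  apply Finset.sum_congr rfl; intro q _
  simp only [Matrix.conjTranspose_apply, Matrix.vecMulVec_apply, Pi.star_apply,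
    _root_.map_mul, starRingEnd_apply, star_star]
  ring

omit [DecidableEq d] in
lemma quad_conjTranspose (N : Matrix d d ℂ) (v : d → ℂ) :
    star v ⬝ᵥ Nᴴ *ᵥ v = (starRingEnd ℂ) (star v ⬝ᵥ N *ᵥ v) := by
  rw [dot_mulVec_sum, dot_mulVec_sum, map_sum, Finset.sum_comm]
  apply Finset.sum_congr rfl; intro p _
  rw [map_sum]
  apply Finset.sum_congr rfl; intro q _
  simp only [Matrix.conjTranspose_apply, _root_.map_mul, starRingEnd_apply, star_star]
  ring

omit [DecidableEq d] in
lemma outer_posSemidef (v : d → ℂ) : (Matrix.vecMulVec v (star v)).PosSemidef := by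
  refine Matrix.PosSemidef.of_dotProduct_mulVec_nonneg ?_ ?_
  · ext p q
    simp only [Matrix.conjTranspose_apply, Matrix.vecMulVec_apply, Pi.star_apply, star_mul',
      star_star]
    ring
  · intro x
    have : star x ⬝ᵥ (Matrix.vecMulVec v (star v)) *ᵥ x
        = star (star v ⬝ᵥ x) * (star v ⬝ᵥ x) := by
      rw [dot_mulVec_sum]
      simp only [Matrix.vecMulVec_apply, Pi.star_apply, dotProduct, star_sum,
        Finset.sum_mul, star_mul', star_star, Finset.mul_sum]
      rw [Finset.sum_comm]
      apply Finset.sum_congr rfl; intro p _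
      apply Finset.sum_congr rfl; intro q _
      simp only [starRingEnd_apply]
      ring
    rw [this]
    exact star_mul_self_nonneg _

lemma psd_diag_nonneg {A : Matrix d d ℂ} (hA : A.PosSemidef) (i : d) : 0 ≤ A i i := by
  have := hA.dotProduct_mulVec_nonneg (Pi.single i 1)
  rw [star_single_c, Matrix.mulVec_single, single_dotProduct] at this
  simpa using this

lemma psd_trace_nonneg {A : Matrix d d ℂ} (hA : A.PosSemidef) : 0 ≤ A.trace := by
  exact Finset.sum_nonneg fun i _ => psd_diag_nonneg hA i

open scoped MatrixOrder Matrix.Norms.L2Operator in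
lemma psd_exists_conj {A : Matrix d d ℂ} (hA : A.PosSemidef) : ∃ N : Matrix d d ℂ, A = Nᴴ * N := by
  obtain ⟨B, hB⟩ := CStarAlgebra.nonneg_iff_eq_star_mul_self.mp hA.nonneg
  exact ⟨B, by rw [hB, Matrix.star_eq_conjTranspose]⟩

lemma trace_mul_psd_nonneg {A B : Matrix d d ℂ} (hA : A.PosSemidef) (hB : B.PosSemidef) :
    0 ≤ (A * B).trace := by
  obtain ⟨N, rfl⟩ := psd_exists_conj hB
  have h1 : (A * (Nᴴ * N)).trace = (N * A * Nᴴ).trace := by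
    rw [← Matrix.mul_assoc, Matrix.trace_mul_comm, ← Matrix.mul_assoc]
  rw [h1]
  exact psd_trace_nonneg (hA.mul_mul_conjTranspose_same N)

end Helpers
section PT
variable {m n : ℕ}

local notation "VV" => Matrix (Fin m × Fin n) (Fin m × Fin n) ℂ

lemma pt_pt (ρ : VV) : partialTranspose (partialTranspose ρ) = ρ := by
  ext ⟨p1, p2⟩ ⟨q1, q2⟩; rfl

lemma pt_conjTranspose (ρ : VV) : (partialTranspose ρ)ᴴ = partialTranspose ρᴴ := by
  ext ⟨p1, p2⟩ ⟨q1, q2⟩; rfl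

lemma pt_add (A B : VV) :
    partialTranspose (A + B) = partialTranspose A + partialTranspose B := by
  ext ⟨p1, p2⟩ ⟨q1, q2⟩; rfl

lemma pt_smul_real (c : ℝ) (A : VV) :
    partialTranspose (c • A) = c • partialTranspose A := by
  ext ⟨p1, p2⟩ ⟨q1, q2⟩; rfl

lemma pt_smul (c : ℂ) (A : VV) :
    partialTranspose (c • A) = c • partialTranspose A := by
  ext ⟨p1, p2⟩ ⟨q1, q2⟩; rfl

def ptPerm (m n : ℕ) :
    ((Fin m × Fin n) × (Fin m × Fin n)) ≃ ((Fin m × Fin n) × (Fin m × Fin n)) where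
  toFun r := ((r.1.1, r.2.2), (r.2.1, r.1.2))
  invFun r := ((r.1.1, r.2.2), (r.2.1, r.1.2))
  left_inv := by rintro ⟨⟨a, b⟩, ⟨c, d⟩⟩; rfl
  right_inv := by rintro ⟨⟨a, b⟩, ⟨c, d⟩⟩; rfl

lemma trace_mul_pt (A B : VV) :
    (A * partialTranspose B).trace = (partialTranspose A * B).trace := by
  rw [trace_mul_eq_sum, trace_mul_eq_sum, ← Fintype.sum_prod_type', ← Fintype.sum_prod_type']
  exact Fintype.sum_equiv (ptPerm m n) _ _ (by rintro ⟨⟨a, b⟩, ⟨c, d⟩⟩; rfl)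

/-- The map associated to a Choi matrix. -/
def psiAux (C : VV) (X : Matrix (Fin m) (Fin m) ℂ) : Matrix (Fin n) (Fin n) ℂ :=
  Matrix.of fun a b => ∑ i, ∑ j, X i j * C (i, a) (j, b)

lemma psiAux_linear (C : VV) : IsLinearMap ℂ (psiAux C) := by
  constructor
  · intro X Y; ext a b
    simp [psiAux, add_mul, Finset.sum_add_distrib]
  · intro c X; ext a b
    simp [psiAux, Finset.mul_sum, mul_assoc]

lemma psiAux_add (C D : VV) (X : Matrix (Fin m) (Fin m) ℂ) :
    psiAux (C + D) X = psiAux C X + psiAux D X := by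
  ext a b
  simp [psiAux, mul_add, Finset.sum_add_distrib]

lemma choi_psiAux (C : VV) : choiMatrix (psiAux C) = C := by
  ext ⟨i, a⟩ ⟨j, b⟩
  show (∑ k, ∑ l, Matrix.single i j 1 k l * C (k, a) (l, b)) = C (i, a) (j, b)
  simp [Matrix.single, ite_and, ite_mul]

lemma psi_transpose (C : VV) (X : Matrix (Fin m) (Fin m) ℂ) :
    (psiAux C X)ᵀ = psiAux (partialTranspose C) X := by
  ext a b; rfl

lemma psi_eq_of_linear {Φ : Matrix (Fin m) (Fin m) ℂ → Matrix (Fin n) (Fin n) ℂ}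
    (hlin : IsLinearMap ℂ Φ) (X : Matrix (Fin m) (Fin m) ℂ) :
    Φ X = psiAux (choiMatrix Φ) X := by
  have hX : Φ X = ∑ i, ∑ j, X i j • Φ (Matrix.single i j 1) := by
    conv_lhs => rw [Matrix.matrix_eq_sum_single X]
    rw [show (Matrix.single : Fin m → Fin m → ℂ → _) = Matrix.single from rfl]
    let F := IsLinearMap.mk' Φ hlin
    show F (∑ i, ∑ j, Matrix.single i j (X i j)) = _
    rw [map_sum]
    apply Finset.sum_congr rfl; intro i _
    rw [map_sum]
    apply Finset.sum_congr rfl; intro j _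
    rw [show Matrix.single i j (X i j) = X i j • Matrix.single i j 1 by
      rw [Matrix.smul_single, smul_eq_mul, mul_one]]
    rw [_root_.map_smul]
    rfl
  ext a b
  rw [hX]
  simp [psiAux, Matrix.sum_apply, choiMatrix]

lemma choi_psd_of_CP {Φ : Matrix (Fin m) (Fin m) ℂ → Matrix (Fin n) (Fin n) ℂ}
    (h : IsCompletelyPositive Φ) : (choiMatrix Φ).PosSemidef := by
  classical
  set w : Fin m × Fin m → ℂ := fun p => if p.1 = p.2 then 1 else 0 with hw
  have h2 := h m _ (outer_posSemidef w)
  have key : blockApply m Φ (Matrix.vecMulVec w (star w)) = choiMatrix Φ := by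
    ext ⟨i, a⟩ ⟨j, b⟩
    show Φ (Matrix.of fun k l => Matrix.vecMulVec w (star w) (i, k) (j, l)) a b
        = Φ (Matrix.single i j 1) a b
    congr 1
    ext k l
    simp only [Matrix.vecMulVec_apply, Pi.star_apply, Matrix.of_apply, hw,
      Matrix.single, ite_and]
    split_ifs <;> simp_all
  rw [← key]
  exact h2

def embL (k : ℕ) (M : VV) (t : Fin m × Fin n) :
    Matrix (Fin k × Fin m) (Fin k × Fin n) ℂ :=
  Matrix.of fun ri qb => if ri.1 = qb.1 then M t (ri.2, qb.2) else 0

lemma sum4_swap {A B C D M : Type*} [Fintype A] [Fintype B] [Fintype C] [Fintype D]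
    [AddCommMonoid M] (f : A → B → C → D → M) :
    ∑ a, ∑ b, ∑ c, ∑ d, f a b c d = ∑ c, ∑ d, ∑ b, ∑ a, f a b c d := by
  have s1 : ∑ a, ∑ b, ∑ c, ∑ d, f a b c d = ∑ a, ∑ c, ∑ d, ∑ b, f a b c d :=
    Finset.sum_congr rfl fun a _ => by
      rw [Finset.sum_comm]
      exact Finset.sum_congr rfl fun c _ => Finset.sum_comm
  rw [s1, Finset.sum_comm]
  apply Finset.sum_congr rfl; intro c _
  rw [Finset.sum_comm]
  apply Finset.sum_congr rfl; intro d _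
  exact Finset.sum_comm

lemma blockApply_psi_eq (k : ℕ) (M : VV) (X : Matrix (Fin k × Fin m) (Fin k × Fin m) ℂ) :
    blockApply k (psiAux (Mᴴ * M)) X
      = ∑ t : Fin m × Fin n, (embL k M t)ᴴ * X * (embL k M t) := by
  ext ⟨p, a⟩ ⟨q, b⟩
  rw [Matrix.sum_apply]
  show (∑ i, ∑ j, X (p, i) (q, j) * (Mᴴ * M) (i, a) (j, b)) = _
  simp only [Matrix.mul_apply, Matrix.conjTranspose_apply, embL, Matrix.of_apply,
    Fintype.sum_prod_type, ite_mul, mul_ite, zero_mul, mul_zero, apply_ite (star : ℂ → ℂ), star_zero,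
    Finset.sum_ite_eq, Finset.sum_ite_eq', Finset.mem_univ, if_true, Finset.mul_sum,
    Finset.sum_mul]
  simp only [Finset.sum_ite_irrel, Finset.sum_const_zero, Finset.sum_ite_eq,
    Finset.sum_ite_eq', Finset.mem_univ, if_true]
  rw [sum4_swap]
  apply Finset.sum_congr rfl; intro _ _
  apply Finset.sum_congr rfl; intro _ _
  apply Finset.sum_congr rfl; intro _ _
  apply Finset.sum_congr rfl; intro _ _
  ring

lemma psd_sum {d : Type*} [Fintype d] {ι : Type*} (s : Finset ι) (f : ι → Matrix d d ℂ)
    (h : ∀ i ∈ s, (f i).PosSemidef) : (∑ i ∈ s, f i).PosSemidef := by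
  classical
  induction s using Finset.induction with
  | empty => simpa using Matrix.PosSemidef.zero
  | insert _ _ hx ih =>
    rw [Finset.sum_insert hx]
    exact (h _ (Finset.mem_insert_self _ _)).add
      (ih fun i hi => h i (Finset.mem_insert_of_mem hi))

lemma CP_of_choi_psd {C : VV} (hC : C.PosSemidef) : IsCompletelyPositive (psiAux C) := by
  obtain ⟨M, rfl⟩ := psd_exists_conj hC
  intro k X hX
  rw [blockApply_psi_eq]
  apply psd_sum
  intro t _
  have := hX.mul_mul_conjTranspose_same (embL k M t)ᴴ
  rwa [Matrix.conjTranspose_conjTranspose] at this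

end PT
section Cone
variable {m n : ℕ}

local notation "VV" => Matrix (Fin m × Fin n) (Fin m × Fin n) ℂ

lemma pt_zero : partialTranspose (0 : VV) = 0 := by
  ext ⟨p1, p2⟩ ⟨q1, q2⟩; rfl

lemma trace_pt (A : VV) : (partialTranspose A).trace = A.trace := by
  apply Finset.sum_congr rfl
  rintro ⟨p1, p2⟩ _
  rfl

/-- The cone of Choi matrices of decomposable maps. -/
def Kcone (m n : ℕ) : Set (Matrix (Fin m × Fin n) (Fin m × Fin n) ℂ) :=
  {A | ∃ P Q, P.PosSemidef ∧ Q.PosSemidef ∧ A = P + partialTranspose Q}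

lemma zero_mem_Kcone : (0 : VV) ∈ Kcone m n :=
  ⟨0, 0, Matrix.PosSemidef.zero, Matrix.PosSemidef.zero, by rw [pt_zero, add_zero]⟩

lemma psd_real_smul {d : Type*} [Fintype d] {P : Matrix d d ℂ} {t : ℝ} (ht : 0 ≤ t)
    (hP : P.PosSemidef) : (t • P).PosSemidef := by
  refine Matrix.PosSemidef.of_dotProduct_mulVec_nonneg ?_ ?_
  · ext p q
    simp only [Matrix.conjTranspose_apply, Matrix.smul_apply, star_smul, star_trivial]
    rw [hP.1.apply]
  · intro x
    rw [Matrix.smul_mulVec, dotProduct_smul, Complex.real_smul]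
    exact mul_nonneg (Complex.zero_le_real.mpr ht) (hP.dotProduct_mulVec_nonneg x)

lemma smul_mem_Kcone {t : ℝ} (ht : 0 ≤ t) {A : VV} (hA : A ∈ Kcone m n) :
    t • A ∈ Kcone m n := by
  obtain ⟨P, Q, hP, hQ, rfl⟩ := hA
  exact ⟨t • P, t • Q, psd_real_smul ht hP, psd_real_smul ht hQ, by
    rw [smul_add, pt_smul_real]⟩

lemma convex_Kcone : Convex ℝ (Kcone m n) := by
  rintro x ⟨P1, Q1, hP1, hQ1, rfl⟩ y ⟨P2, Q2, hP2, hQ2, rfl⟩ a b ha hb _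
  refine ⟨a • P1 + b • P2, a • Q1 + b • Q2, (psd_real_smul ha hP1).add (psd_real_smul hb hP2),
    (psd_real_smul ha hQ1).add (psd_real_smul hb hQ2), ?_⟩
  rw [pt_add, pt_smul_real, pt_smul_real]
  simp only [smul_add]
  abel

lemma psd_entry_norm_le {d : Type*} [Fintype d] [DecidableEq d] {A : Matrix d d ℂ}
    (hA : A.PosSemidef) (p q : d) : ‖A p q‖ ≤ A.trace.re := by
  have hd : ∀ r, 0 ≤ A r r := psd_diag_nonneg hA
  have hdre : ∀ r, 0 ≤ (A r r).re := fun r => (Complex.le_def.mp (hd r)).1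
  have htr : A.trace.re = ∑ r, (A r r).re := by
    simp [Matrix.trace, Matrix.diag, Complex.re_sum]
  by_cases hz : A p q = 0
  · rw [hz, norm_zero, htr]
    exact Finset.sum_nonneg fun r _ => hdre r
  by_cases hpq : p = q
  · subst hpq
    have him : (A p p).im = 0 := ((Complex.le_def.mp (hd p)).2).symm
    have : ‖A p p‖ = (A p p).re := by
      rw [Complex.norm_def, Complex.normSq_apply, him]
      simp [Real.sqrt_mul_self (hdre p)]
    rw [this, htr]
    exact Finset.single_le_sum (fun r _ => hdre r) (Finset.mem_univ p)
  · -- off-diagonal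
    set s : ℂ := -(A p q) / ‖A p q‖ with hs
    have hApq : (starRingEnd ℂ) (A p q) * A p q = ((‖A p q‖ : ℂ)) ^ 2 := by
      rw [mul_comm, Complex.mul_conj']
    have hnz : (‖A p q‖ : ℂ) ≠ 0 := by
      simpa using hz
    have h1 : (starRingEnd ℂ) s * A p q = -‖A p q‖ := by
      rw [hs, map_div₀, map_neg, Complex.conj_ofReal,
        show -(starRingEnd ℂ) (A p q) / (‖A p q‖ : ℂ) * A p q
          = -((starRingEnd ℂ) (A p q) * A p q) / (‖A p q‖ : ℂ) by ring,
        hApq, pow_two, neg_div, mul_div_assoc, div_self hnz, mul_one]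
    have hqp : A q p = (starRingEnd ℂ) (A p q) := by
      rw [← hA.1.apply q p, starRingEnd_apply]
    have h2 : A q p * s = -‖A p q‖ := by
      rw [hqp, hs,
        show (starRingEnd ℂ) (A p q) * (-A p q / (‖A p q‖ : ℂ))
          = -((starRingEnd ℂ) (A p q) * A p q) / (‖A p q‖ : ℂ) by ring,
        hApq, pow_two, neg_div, mul_div_assoc, div_self hnz, mul_one]
    have hss : (starRingEnd ℂ) s * s = 1 := by
      rw [hs, map_div₀, map_neg, Complex.conj_ofReal,
        show -(starRingEnd ℂ) (A p q) / (‖A p q‖ : ℂ) * (-A p q / (‖A p q‖ : ℂ))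
          = ((starRingEnd ℂ) (A p q) * A p q) / (‖A p q‖ : ℂ) ^ 2 by ring,
        hApq, div_self (pow_ne_zero 2 hnz)]
    have hQ := hA.dotProduct_mulVec_nonneg (Pi.single p s + Pi.single q 1)
    rw [quad_single_single] at hQ
    have hform : (starRingEnd ℂ) s * A p p * s + (starRingEnd ℂ) s * A p q * 1
        + (starRingEnd ℂ) 1 * A q p * s + (starRingEnd ℂ) 1 * A q q * 1
        = A p p + A q q - 2 * ‖A p q‖ := by
      rw [_root_.map_one, one_mul, one_mul, mul_one, mul_one, h2]
      have : (starRingEnd ℂ) s * A p p * s = A p p := by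
        rw [mul_comm ((starRingEnd ℂ) s) (A p p), mul_assoc, hss, mul_one]
      rw [this, h1]
      ring
    rw [hform] at hQ
    have hre := (Complex.le_def.mp hQ).1
    simp only [Complex.sub_re, Complex.add_re, Complex.zero_re, Complex.mul_re,
      Complex.ofReal_re, Complex.ofReal_im, Complex.re_ofNat, Complex.im_ofNat] at hre
    have hsum : (A p p).re + (A q q).re ≤ A.trace.re := by
      rw [htr]
      have := Finset.sum_le_sum_of_subset_of_nonneg
        (Finset.subset_univ {p, q}) (fun r _ _ => hdre r)
      rwa [Finset.sum_pair hpq] at this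
    nlinarith [norm_nonneg (A p q)]

end Cone
section Topology
variable {m n : ℕ}

local notation "VV" => Matrix (Fin m × Fin n) (Fin m × Fin n) ℂ

attribute [local instance] Matrix.normedAddCommGroup Matrix.normedSpace

lemma isClosed_nonneg_complex : IsClosed {z : ℂ | 0 ≤ z} := by
  have : {z : ℂ | 0 ≤ z} = Complex.re ⁻¹' (Set.Ici 0) ∩ Complex.im ⁻¹' {0} := by
    ext z
    simp [Complex.le_def, eq_comm]
  rw [this]
  exact (isClosed_Ici.preimage Complex.continuous_re).inter
    (isClosed_singleton.preimage Complex.continuous_im)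

lemma continuous_entry {d : Type*} [Fintype d] (p q : d) :
    Continuous fun A : Matrix d d ℂ => A p q := by
  let L : Matrix d d ℂ →ₗ[ℂ] ℂ :=
    { toFun := fun A => A p q
      map_add' := fun _ _ => rfl
      map_smul' := fun _ _ => rfl }
  exact L.continuous_of_finiteDimensional

lemma continuous_quad {d : Type*} [Fintype d] (x : d → ℂ) :
    Continuous fun A : Matrix d d ℂ => star x ⬝ᵥ A *ᵥ x := by
  let L : Matrix d d ℂ →ₗ[ℂ] ℂ :=
    { toFun := fun A => star x ⬝ᵥ A *ᵥ x
      map_add' := fun A B => by rw [Matrix.add_mulVec, dotProduct_add]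
      map_smul' := fun c A => by rw [Matrix.smul_mulVec, dotProduct_smul]; rfl }
  exact L.continuous_of_finiteDimensional

lemma continuous_trace_re {d : Type*} [Fintype d] :
    Continuous fun A : Matrix d d ℂ => A.trace.re := by
  refine Complex.continuous_re.comp ?_
  let L : Matrix d d ℂ →ₗ[ℂ] ℂ :=
    { toFun := fun A => A.trace
      map_add' := fun A B => Matrix.trace_add A B
      map_smul' := fun c A => Matrix.trace_smul c A }
  exact L.continuous_of_finiteDimensional

lemma continuous_pt : Continuous fun A : VV => partialTranspose A := by
  let L : VV →ₗ[ℂ] VV :=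
    { toFun := fun A => partialTranspose A
      map_add' := fun A B => pt_add A B
      map_smul' := fun c A => pt_smul c A }
  exact L.continuous_of_finiteDimensional

lemma isClosed_psdSet {d : Type*} [Fintype d] [DecidableEq d] :
    IsClosed {A : Matrix d d ℂ | A.PosSemidef} := by
  have hset : {A : Matrix d d ℂ | A.PosSemidef}
      = (⋂ (p : d), ⋂ (q : d), {A : Matrix d d ℂ | A q p = star (A p q)})
        ∩ ⋂ (x : d → ℂ), {A : Matrix d d ℂ | 0 ≤ star x ⬝ᵥ A *ᵥ x} := by
    ext A
    constructor
    · intro h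
      refine ⟨Set.mem_iInter.mpr fun p => Set.mem_iInter.mpr fun q => ?_,
        Set.mem_iInter.mpr fun x => h.dotProduct_mulVec_nonneg x⟩
      exact (h.1.apply q p).symm
    · rintro ⟨h1, h2⟩
      refine Matrix.PosSemidef.of_dotProduct_mulVec_nonneg ?_ ?_
      · ext i j
        rw [Matrix.conjTranspose_apply]
        have := Set.mem_iInter.mp (Set.mem_iInter.mp h1 j) i
        exact this.symm
      · exact fun x => Set.mem_iInter.mp h2 x
  rw [hset]
  refine IsClosed.inter (isClosed_iInter fun p => isClosed_iInter fun q => ?_)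
    (isClosed_iInter fun x => ?_)
  · exact isClosed_eq (continuous_entry q p) (continuous_star.comp (continuous_entry p q))
  · exact isClosed_nonneg_complex.preimage (continuous_quad x)

lemma isClosed_Kcone : IsClosed (Kcone m n) := by
  haveI : SequentialSpace VV := inferInstanceAs (SequentialSpace (Fin m × Fin n → Fin m × Fin n → ℂ))
  apply IsSeqClosed.isClosed
  intro u x hu hx
  choose P Q hP hQ hPQ using hu
  have htrcont : Filter.Tendsto (fun j => (u j).trace.re) Filter.atTop (nhds (x.trace.re)) :=
    (continuous_trace_re.tendsto x).comp hx
  obtain ⟨R, hR⟩ := htrcont.bddAbove_range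
  set R' := max R 0 with hR'
  have hbound : ∀ j, ‖P j‖ ≤ R' := by
    intro j
    have htrQ : 0 ≤ (Q j).trace.re := (Complex.le_def.mp (psd_trace_nonneg (hQ j))).1
    have htru : (u j).trace.re = (P j).trace.re + (Q j).trace.re := by
      rw [hPQ j, Matrix.trace_add, trace_pt, Complex.add_re]
    have hPle : (P j).trace.re ≤ (u j).trace.re := by linarith
    have hRj : (u j).trace.re ≤ R := hR (Set.mem_range_self j)
    have h0 : 0 ≤ (P j).trace.re := (Complex.le_def.mp (psd_trace_nonneg (hP j))).1
    rw [Matrix.norm_le_iff (by positivity)]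
    intro a b
    calc ‖P j a b‖ ≤ (P j).trace.re := psd_entry_norm_le (hP j) a b
      _ ≤ R' := by
          calc (P j).trace.re ≤ R := le_trans hPle hRj
            _ ≤ R' := le_max_left _ _
  obtain ⟨Plim, _, φ, hφ, hPlim⟩ :=
    (isCompact_closedBall (0 : VV) R').tendsto_subseq
      (fun j => by
        rw [Metric.mem_closedBall, dist_zero_right]
        exact hbound j)
  have hx' : Filter.Tendsto (u ∘ φ) Filter.atTop (nhds x) := hx.comp (hφ.tendsto_atTop)
  have hptQ : ∀ j, partialTranspose (Q j) = u j - P j := by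
    intro j
    rw [hPQ j]
    abel
  have hQlim : Filter.Tendsto (fun j => partialTranspose (Q (φ j))) Filter.atTop
      (nhds (x - Plim)) := by
    have := hx'.sub hPlim
    simpa [Function.comp, hptQ] using this
  have hQlim2 : Filter.Tendsto (fun j => Q (φ j)) Filter.atTop
      (nhds (partialTranspose (x - Plim))) := by
    have := (continuous_pt.tendsto (x - Plim)).comp hQlim
    simpa [Function.comp_def, pt_pt] using this
  have hPlimPsd : Plim.PosSemidef := by
    have : Plim ∈ {A : VV | A.PosSemidef} :=
      isClosed_psdSet.mem_of_tendsto hPlim (Filter.Eventually.of_forall fun j => hP (φ j))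
    exact this
  have hQlimPsd : (partialTranspose (x - Plim)).PosSemidef := by
    have : partialTranspose (x - Plim) ∈ {A : VV | A.PosSemidef} :=
      isClosed_psdSet.mem_of_tendsto hQlim2 (Filter.Eventually.of_forall fun j => hQ (φ j))
    exact this
  exact ⟨Plim, partialTranspose (x - Plim), hPlimPsd, hQlimPsd, by rw [pt_pt]; abel⟩

end Topology
section Repr
variable {m n : ℕ}

local notation "VV" => Matrix (Fin m × Fin n) (Fin m × Fin n) ℂ

lemma sum4_perm2 {A B C D M : Type*} [Fintype A] [Fintype B] [Fintype C] [Fintype D]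
    [AddCommMonoid M] (f : A → B → C → D → M) :
    ∑ a, ∑ b, ∑ c, ∑ d, f a b c d = ∑ c, ∑ a, ∑ d, ∑ b, f a b c d := by
  have s1 : ∑ a, ∑ b, ∑ c, ∑ d, f a b c d = ∑ a, ∑ c, ∑ b, ∑ d, f a b c d :=
    Finset.sum_congr rfl fun a _ => Finset.sum_comm
  rw [s1, Finset.sum_comm]
  apply Finset.sum_congr rfl; intro c _
  apply Finset.sum_congr rfl; intro a _
  exact Finset.sum_comm

lemma matrix_real_decomp {d : Type*} [Fintype d] [DecidableEq d] (A : Matrix d d ℂ) :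
    A = ∑ p, ∑ q, ((A p q).re • Matrix.single p q 1
      + (A p q).im • Matrix.single p q Complex.I) := by
  ext r s
  rw [Matrix.sum_apply]
  simp only [Matrix.sum_apply, Matrix.add_apply, Matrix.smul_apply, Matrix.single,
    Matrix.of_apply, smul_ite, smul_zero, ite_and, Finset.sum_ite_irrel,
    Finset.sum_const_zero, Finset.sum_ite_eq, Finset.sum_ite_eq', Finset.mem_univ, if_true,
    Finset.sum_add_distrib]
  rw [Complex.real_smul, Complex.real_smul, mul_one, Complex.re_add_im]

/-- The matrix representing a real-linear functional on complex matrices. -/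
def Wmat (f : VV →L[ℝ] ℝ) : VV :=
  Matrix.of fun p q => ((f (Matrix.single p q 1) : ℝ) : ℂ)
    + ((f (Matrix.single p q Complex.I) : ℝ) : ℂ) * Complex.I

lemma Wmat_re (f : VV →L[ℝ] ℝ) (p q : Fin m × Fin n) :
    (Wmat f p q).re = f (Matrix.single p q 1) := by
  simp [Wmat]

lemma Wmat_im (f : VV →L[ℝ] ℝ) (p q : Fin m × Fin n) :
    (Wmat f p q).im = f (Matrix.single p q Complex.I) := by
  simp [Wmat]

lemma f_repr (f : VV →L[ℝ] ℝ) (A : VV) :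
    f A = (((Wmat f)ᴴ * A).trace).re := by
  have hL : f A = ∑ p, ∑ q, ((A p q).re * f (Matrix.single p q 1)
      + (A p q).im * f (Matrix.single p q Complex.I)) := by
    conv_lhs => rw [matrix_real_decomp A]
    rw [map_sum]
    refine Finset.sum_congr rfl fun p _ => ?_
    rw [map_sum]
    refine Finset.sum_congr rfl fun q _ => ?_
    rw [map_add, ContinuousLinearMap.map_smul, ContinuousLinearMap.map_smul,
      smul_eq_mul, smul_eq_mul]
  have hR : (((Wmat f)ᴴ * A).trace).re
      = ∑ p, ∑ q, ((Wmat f q p).re * (A q p).re + (Wmat f q p).im * (A q p).im) := by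
    rw [trace_mul_eq_sum, Complex.re_sum]
    refine Finset.sum_congr rfl fun p _ => ?_
    rw [Complex.re_sum]
    refine Finset.sum_congr rfl fun q _ => ?_
    rw [Matrix.conjTranspose_apply, Complex.mul_re]
    simp only [Complex.star_def, Complex.conj_re, Complex.conj_im]
    ring
  rw [hL, hR, Finset.sum_comm]
  refine Finset.sum_congr rfl fun p _ => ?_
  refine Finset.sum_congr rfl fun q _ => ?_
  rw [Wmat_re, Wmat_im]
  ring

lemma choi_hermitian_of_PPT {C : VV}
    (h : ∀ (x : Fin m → ℂ) (y : Fin n → ℂ),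
      star (tensorVec x y) ⬝ᵥ C *ᵥ (tensorVec x y)
        = (starRingEnd ℂ) (star (tensorVec x y) ⬝ᵥ C *ᵥ (tensorVec x y))) :
    C.IsHermitian := by
  have hD : ∀ (x : Fin m → ℂ) (y : Fin n → ℂ),
      star (tensorVec x y) ⬝ᵥ (C - Cᴴ) *ᵥ (tensorVec x y) = 0 := by
    intro x y
    rw [Matrix.sub_mulVec, dotProduct_sub, quad_conjTranspose, ← h x y, sub_self]
  have step1 : ∀ x : Fin m → ℂ,
      (Matrix.of fun a b => ∑ i, ∑ j,
        (starRingEnd ℂ) (x i) * x j * (C - Cᴴ) (i, a) (j, b) : Matrix (Fin n) (Fin n) ℂ)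
        = 0 := by
    intro x
    apply quadform_eq_zero
    intro y
    rw [← hD x y, dot_mulVec_sum, dot_mulVec_sum]
    simp only [Matrix.of_apply, Fintype.sum_prod_type, Finset.mul_sum, Finset.sum_mul]
    rw [sum4_perm2]
    refine Finset.sum_congr rfl fun a _ => ?_
    refine Finset.sum_congr rfl fun i _ => ?_
    refine Finset.sum_congr rfl fun b _ => ?_
    refine Finset.sum_congr rfl fun j _ => ?_
    simp only [tensorVec, _root_.map_mul]
    ring
  have step2 : C - Cᴴ = 0 := by
    ext ⟨i, a⟩ ⟨j, b⟩
    have hN : (Matrix.of fun i j => (C - Cᴴ) (i, a) (j, b) : Matrix (Fin m) (Fin m) ℂ) = 0 := by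
      apply quadform_eq_zero
      intro x
      have hx := congrFun (congrFun (congrArg (fun M => (M : Matrix (Fin n) (Fin n) ℂ)) (step1 x)) a) b
      simp only [Matrix.of_apply, Matrix.zero_apply] at hx
      rw [dot_mulVec_sum]
      rw [← hx]
      refine Finset.sum_congr rfl fun i' _ => ?_
      refine Finset.sum_congr rfl fun j' _ => ?_
      simp only [Matrix.of_apply]
      ring
    have := congrFun (congrFun (congrArg (fun M => (M : Matrix (Fin m) (Fin m) ℂ)) hN) i) j
    simpa using this
  rw [Matrix.IsHermitian, ← sub_eq_zero]
  have : Cᴴ - C = -(C - Cᴴ) := (neg_sub _ _).symm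
  rw [this, step2, neg_zero]

end Repr
section Main
variable {m n : ℕ}

local notation "VV" => Matrix (Fin m × Fin n) (Fin m × Fin n) ℂ

attribute [local instance] Matrix.normedAddCommGroup Matrix.normedSpace

lemma herm_smul_psd (W : VV) (hdual : ∀ v, (star v ⬝ᵥ W *ᵥ v).re ≤ 0) :
    ((-(2⁻¹ : ℝ)) • (W + Wᴴ)).PosSemidef := by
  refine Matrix.PosSemidef.of_dotProduct_mulVec_nonneg ?_ ?_
  · ext p q
    simp only [Matrix.conjTranspose_apply, Matrix.smul_apply, Matrix.add_apply, star_smul,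
      star_add, star_star, star_trivial, Complex.real_smul]
    simp only [star_add, star_mul', star_star, Complex.star_def, Complex.conj_ofReal, Complex.conj_conj]
    ring
  · intro v
    have hq : star v ⬝ᵥ ((-(2⁻¹ : ℝ)) • (W + Wᴴ)) *ᵥ v
        = (((-(star v ⬝ᵥ W *ᵥ v).re : ℝ)) : ℂ) := by
      rw [Matrix.smul_mulVec, dotProduct_smul, Matrix.add_mulVec,
        dotProduct_add, quad_conjTranspose,
        show star v ⬝ᵥ W *ᵥ v + (starRingEnd ℂ) (star v ⬝ᵥ W *ᵥ v)
          = ((2 * (star v ⬝ᵥ W *ᵥ v).re : ℝ) : ℂ) from by rw [Complex.add_conj]; try push_cast; try ring,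
        Complex.real_smul]
      push_cast
      ring
    rw [hq]
    exact Complex.zero_le_real.mpr (by linarith [hdual v])

lemma mem_Kcone_of_dual {C : VV} (hherm : C.IsHermitian)
    (h : ∀ ρ : VV, ρ.PosSemidef → (partialTranspose ρ).PosSemidef → 0 ≤ (ρ * C).trace) :
    C ∈ Kcone m n := by
  by_contra hmem
  haveI : LocallyConvexSpace ℝ VV := NormedSpace.toLocallyConvexSpace
  obtain ⟨f, u, hfu, huC⟩ :=
    geometric_hahn_banach_closed_point convex_Kcone isClosed_Kcone hmem
  have hu0 : (0 : ℝ) < u := by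
    have := hfu 0 zero_mem_Kcone
    simpa using this
  have hfK : ∀ a ∈ Kcone m n, f a ≤ 0 := by
    intro a ha
    by_contra hpos
    push_neg at hpos
    have ht : (0 : ℝ) ≤ (u + 1) / f a := by positivity
    have h2 := hfu _ (smul_mem_Kcone ht ha)
    rw [ContinuousLinearMap.map_smul, smul_eq_mul, div_mul_cancel₀ _ (ne_of_gt hpos)] at h2
    linarith
  set W := Wmat f with hWdef
  have hflip : ∀ (N : VV) (v : Fin m × Fin n → ℂ),
      ((Nᴴ * Matrix.vecMulVec v (star v)).trace).re = (star v ⬝ᵥ N *ᵥ v).re := by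
    intro N v
    rw [trace_conjTranspose_outer]
    exact Complex.conj_re _
  have hWdual : ∀ v, (star v ⬝ᵥ W *ᵥ v).re ≤ 0 := by
    intro v
    have hmem' : Matrix.vecMulVec v (star v) ∈ Kcone m n :=
      ⟨_, 0, outer_posSemidef v, Matrix.PosSemidef.zero, by rw [pt_zero, add_zero]⟩
    have h2 := hfK _ hmem'
    rw [f_repr, hflip W v] at h2
    exact h2
  have hptWdual : ∀ v, (star v ⬝ᵥ (partialTranspose W) *ᵥ v).re ≤ 0 := by
    intro v
    have hmem' : partialTranspose (Matrix.vecMulVec v (star v)) ∈ Kcone m n :=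
      ⟨0, _, Matrix.PosSemidef.zero, outer_posSemidef v, by rw [zero_add]⟩
    have h2 := hfK _ hmem'
    rw [f_repr, trace_mul_pt, ← pt_conjTranspose, hflip (partialTranspose W) v] at h2
    exact h2
  set ρ : VV := (-(2⁻¹ : ℝ)) • (W + Wᴴ) with hρdef
  have hρpsd : ρ.PosSemidef := herm_smul_psd W hWdual
  have hptρ : partialTranspose ρ
      = (-(2⁻¹ : ℝ)) • (partialTranspose W + (partialTranspose W)ᴴ) := by
    rw [hρdef, pt_smul_real, pt_add, pt_conjTranspose]
  have hptρpsd : (partialTranspose ρ).PosSemidef := by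
    rw [hptρ]
    exact herm_smul_psd (partialTranspose W) hptWdual
  have hρC := h ρ hρpsd hptρpsd
  have hconj : (W * C).trace = (starRingEnd ℂ) ((Wᴴ * C).trace) := by
    calc (W * C).trace = (C * W).trace := Matrix.trace_mul_comm W C
      _ = (Cᴴ * W).trace := by rw [hherm.eq]
      _ = ((Wᴴ * C)ᴴ).trace := by
          rw [Matrix.conjTranspose_mul, Matrix.conjTranspose_conjTranspose]
      _ = (starRingEnd ℂ) ((Wᴴ * C).trace) := Matrix.trace_conjTranspose _
  have hkey : (ρ * C).trace = ((-(((Wᴴ * C).trace).re) : ℝ) : ℂ) := by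
    rw [hρdef, Matrix.smul_mul, Matrix.trace_smul, Matrix.add_mul, Matrix.trace_add, hconj,
      show (starRingEnd ℂ) ((Wᴴ * C).trace) + (Wᴴ * C).trace
        = ((2 * ((Wᴴ * C).trace).re : ℝ) : ℂ) from by
          rw [add_comm, Complex.add_conj]; try push_cast; try ring,
      Complex.real_smul]
    push_cast
    ring
  rw [hkey] at hρC
  have hre : (0 : ℝ) ≤ -(((Wᴴ * C).trace).re) := by
    have := (Complex.le_def.mp hρC).1
    simpa using this
  have hfC : f C = (((Wᴴ * C).trace)).re := f_repr f C
  linarith [huC, hfC ▸ huC]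

end Main
/-- A linear map `Φ : M_m → M_n` is decomposable iff `Tr(ρ C_Φ) ≥ 0`
for every PPT matrix `ρ ∈ M_m ⊗ M_n`. -/
theorem isDecomposable_iff_trace_nonneg_on_PPT (m n : ℕ)
    (Φ : Matrix (Fin m) (Fin m) ℂ → Matrix (Fin n) (Fin n) ℂ) (hlin : IsLinearMap ℂ Φ) :
    IsDecomposable Φ ↔ ∀ ρ : Matrix (Fin m × Fin n) (Fin m × Fin n) ℂ,
      ρ.PosSemidef → (partialTranspose ρ).PosSemidef → 0 ≤ (ρ * choiMatrix Φ).trace := by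
  constructor
  · rintro ⟨Φ₁, Φ₂, hl1, hl2, hcp1, hcp2, hsum⟩ ρ hρ hρpt
    have hC : choiMatrix Φ
        = choiMatrix Φ₁ + partialTranspose (choiMatrix fun X => (Φ₂ X)ᵀ) := by
      ext ⟨i, a⟩ ⟨j, b⟩
      show Φ (Matrix.single i j 1) a b = _
      rw [hsum]
      rfl
    rw [hC, Matrix.mul_add, Matrix.trace_add, trace_mul_pt]
    exact add_nonneg (trace_mul_psd_nonneg hρ (choi_psd_of_CP hcp1))
      (trace_mul_psd_nonneg hρpt (choi_psd_of_CP hcp2))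
  · intro h
    have hherm : (choiMatrix Φ).IsHermitian := by
      apply choi_hermitian_of_PPT
      intro x y
      set v := tensorVec x y with hv
      have h2 : partialTranspose (Matrix.vecMulVec v (star v))
          = Matrix.vecMulVec (tensorVec x (star y)) (star (tensorVec x (star y))) := by
        ext ⟨p1, p2⟩ ⟨q1, q2⟩
        show v (p1, q2) * star (v (q1, p2)) = _
        simp only [Matrix.vecMulVec_apply, Pi.star_apply, tensorVec, hv, star_mul', star_star]
        ring
      have h3 := h _ (outer_posSemidef v) (by rw [h2]; exact outer_posSemidef _)
      rw [trace_outer_left] at h3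
      have him : (star v ⬝ᵥ choiMatrix Φ *ᵥ v).im = 0 := ((Complex.le_def.mp h3).2).symm
      exact (Complex.conj_eq_iff_im.mpr him).symm
    obtain ⟨P, Q, hP, hQ, hC⟩ :=
      mem_Kcone_of_dual hherm (fun ρ h1 h2 => h ρ h1 h2)
    refine ⟨psiAux P, psiAux (partialTranspose Q), psiAux_linear P, psiAux_linear _,
      CP_of_choi_psd hP, ?_, ?_⟩
    · have heq : (fun X => (psiAux (partialTranspose Q) X)ᵀ) = psiAux Q := by
        funext X
        rw [psi_transpose, pt_pt]
      rw [heq]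
      exact CP_of_choi_psd hQ
    · intro X
      rw [psi_eq_of_linear hlin X, hC, psiAux_add]
end
end

section
/- Let A = (a_{ij}) be an n×n real matrix with nonnegative entries and let Φ_A(X) = Δ_A(X) − X, where Δ_A(X) is the diagonal matrix with i-th diagonal entry Σ_j (a_{ij}+δ_{ij}) x_{jj}. Then Φ_A is positive if and only if for all nonnegative reals p_1,…,p_n, q_1,…,q_n one has Σ_{i,j} (a_{ij}+δ_{ij}) p_i² q_j² ≥ (Σ_i p_i q_i)². -/
open Matrix
open scoped ComplexOrder

noncomputable section

lemma psd_diag_eq {n : ℕ} {X : Matrix (Fin n) (Fin n) ℂ} (hX : X.PosSemidef) (j : Fin n) :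
    X j j = ((Real.sqrt ((X j j).re)) ^ 2 : ℝ) := by
  have h0 : 0 ≤ X j j := by
    simpa [dotProduct, Pi.single_apply, apply_ite] using hX.dotProduct_mulVec_nonneg (Pi.single j 1)
  obtain ⟨hre, him⟩ := Complex.nonneg_iff.mp h0
  rw [Real.sq_sqrt hre]
  exact Complex.ext (by simp) (by simp [← him])

lemma psd_entry_bound {n : ℕ} {X : Matrix (Fin n) (Fin n) ℂ} (hX : X.PosSemidef) (i j : Fin n) :
    ‖X i j‖ ≤ Real.sqrt ((X i i).re) * Real.sqrt ((X j j).re) := by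
  obtain ⟨B, rfl⟩ : ∃ B : Matrix (Fin n) (Fin n) ℂ, X = Bᴴ * B := by
    open scoped MatrixOrder in
    exact CStarAlgebra.nonneg_iff_eq_star_mul_self.mp hX.nonneg
  have hentry : ∀ i j : Fin n, (Bᴴ * B) i j =
      inner (𝕜 := ℂ) ((WithLp.equiv 2 (Fin n → ℂ)).symm fun k => B k i)
        ((WithLp.equiv 2 (Fin n → ℂ)).symm fun k => B k j) := by
    intro i j
    simp [Matrix.mul_apply, Matrix.conjTranspose_apply, PiLp.inner_apply]
    exact Finset.sum_congr rfl fun k _ => mul_comm _ _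
  have hnorm : ∀ i : Fin n, ‖(WithLp.equiv 2 (Fin n → ℂ)).symm fun k => B k i‖
      = Real.sqrt (((Bᴴ * B) i i).re) := by
    intro i
    rw [@norm_eq_sqrt_re_inner ℂ, hentry i i]
    norm_num
  rw [hentry i j, ← hnorm i, ← hnorm j]
  exact norm_inner_le_norm _ _

/-- `Φ_A(X) = Δ_A(X) - X` is positive iff
`∑_{ij} (a_{ij}+δ_{ij}) pᵢ² qⱼ² ≥ (∑ᵢ pᵢqᵢ)²` for all nonnegative `pᵢ, qᵢ`. -/
theorem phiDelta_pos_iff (n : ℕ) (A : Matrix (Fin n) (Fin n) ℝ) (hA : ∀ i j, 0 ≤ A i j) :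
    IsPosMap (PhiDelta A) ↔ ∀ p q : Fin n → ℝ, (∀ i, 0 ≤ p i) → (∀ i, 0 ≤ q i) →
      (∑ i, p i * q i) ^ 2 ≤
        ∑ i, ∑ j, (A i j + if i = j then 1 else 0) * (p i) ^ 2 * (q j) ^ 2 := by
  constructor
  · intro hΦ p q hp hq
    set X : Matrix (Fin n) (Fin n) ℂ := Matrix.of fun i j => (q i : ℂ) * (q j : ℂ) with hXdef
    have hXpsd : X.PosSemidef := by
      refine Matrix.PosSemidef.of_dotProduct_mulVec_nonneg ?_ ?_
      · ext i j
        simp [X, Matrix.conjTranspose_apply, mul_comm, Complex.conj_ofReal]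
      · intro w
        have key : star w ⬝ᵥ X *ᵥ w =
            (∑ i, star (w i) * (q i : ℂ)) * star (∑ i, star (w i) * (q i : ℂ)) := by
          rw [star_sum]
          simp only [StarMul.star_mul, star_star, Complex.star_def, Complex.conj_ofReal]
          rw [Finset.sum_mul_sum]
          simp only [dotProduct, mulVec, Matrix.of_apply, Pi.star_apply, X, Finset.mul_sum]
          refine Finset.sum_congr rfl fun i _ => Finset.sum_congr rfl fun j _ => by
            simp [Complex.star_def]; ring
        rw [key]
        exact mul_star_self_nonneg _
    set pC : Fin n → ℂ := fun i => (p i : ℂ) with hpC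
    have h2 := (hΦ X hXpsd).dotProduct_mulVec_nonneg pC
    have e1 : star pC ⬝ᵥ (PhiDelta A X) *ᵥ pC
        = star pC ⬝ᵥ (DeltaMap A X) *ᵥ pC - star pC ⬝ᵥ X *ᵥ pC := by
      rw [PhiDelta, Matrix.sub_mulVec, dotProduct_sub]
    have e2 : star pC ⬝ᵥ (DeltaMap A X) *ᵥ pC
        = ((∑ i, ∑ j, (A i j + if i = j then 1 else 0) * (p i) ^ 2 * (q j) ^ 2 : ℝ) : ℂ) := by
      simp only [DeltaMap, mulVec_diagonal, dotProduct, Pi.star_apply, pC, Complex.star_def,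
        Complex.conj_ofReal, X, Matrix.of_apply]
      push_cast
      refine Finset.sum_congr rfl fun i _ => ?_
      rw [Finset.sum_mul, Finset.mul_sum]
      refine Finset.sum_congr rfl fun j _ => ?_
      split_ifs <;> push_cast <;> ring
    have e3 : star pC ⬝ᵥ X *ᵥ pC = (((∑ i, p i * q i) ^ 2 : ℝ) : ℂ) := by
      simp only [dotProduct, mulVec, Matrix.of_apply, X, Pi.star_apply, Complex.star_def,
        Complex.conj_ofReal, pC]
      push_cast
      rw [sq, Finset.sum_mul_sum]
      simp only [Finset.mul_sum]
      exact Finset.sum_congr rfl fun i _ => Finset.sum_congr rfl fun j _ => by ring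
    rw [e1, e2, e3, ← Complex.ofReal_sub] at h2
    have := Complex.zero_le_real.mp h2
    linarith
  · intro h X hX
    set q : Fin n → ℝ := fun j => Real.sqrt ((X j j).re) with hqdef
    have hdiag : ∀ j, X j j = ((q j) ^ 2 : ℝ) := fun j => psd_diag_eq hX j
    refine Matrix.PosSemidef.of_dotProduct_mulVec_nonneg ?_ ?_
    · refine Matrix.IsHermitian.sub ?_ hX.1
      refine Matrix.isHermitian_diagonal_of_self_adjoint _ (funext fun i => ?_)
      show star (∑ j, ((A i j : ℂ) + if i = j then 1 else 0) * X j j) = _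
      rw [star_sum]
      refine Finset.sum_congr rfl fun j _ => ?_
      rw [hdiag j]
      split_ifs <;> simp [Complex.star_def, ← Complex.ofReal_pow]
    · intro w
      set p : Fin n → ℝ := fun i => ‖w i‖ with hpdef
      have hpq := h p q (fun i => norm_nonneg _) (fun i => Real.sqrt_nonneg _)
      set s := star w ⬝ᵥ X *ᵥ w with hsdef
      have hs0 : 0 ≤ s := hX.dotProduct_mulVec_nonneg w
      obtain ⟨hsre, hsim⟩ := Complex.nonneg_iff.mp hs0
      have hseq : s = ((s.re : ℝ) : ℂ) := Complex.ext (by simp) (by simp [← hsim])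
      have hsb : s.re ≤ (∑ i, p i * q i) ^ 2 := by
        have h1 : s.re ≤ ‖s‖ := Complex.re_le_norm s
        have h2 : ‖s‖ ≤ ∑ i, ∑ j, p i * (q i * q j) * p j := by
          have hs2 : s = ∑ i, ∑ j, star (w i) * (X i j * w j) := by
            simp [hsdef, dotProduct, mulVec, Finset.mul_sum]
          rw [hs2]
          refine (norm_sum_le _ _).trans ?_
          refine ((Finset.sum_le_sum (fun i _ => norm_sum_le _ _)).trans ?_)
          refine Finset.sum_le_sum fun i _ => Finset.sum_le_sum fun j _ => ?_
          rw [norm_mul, norm_mul, norm_star]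
          calc ‖w i‖ * (‖X i j‖ * ‖w j‖) ≤ ‖w i‖ * ((q i * q j) * ‖w j‖) := by
                refine mul_le_mul_of_nonneg_left ?_ (norm_nonneg _)
                exact mul_le_mul_of_nonneg_right (psd_entry_bound hX i j) (norm_nonneg _)
            _ = p i * (q i * q j) * p j := by rw [hpdef]; ring
        have h3 : ∑ i, ∑ j, p i * (q i * q j) * p j = (∑ i, p i * q i) ^ 2 := by
          rw [sq, Finset.sum_mul_sum]
          exact Finset.sum_congr rfl fun i _ => Finset.sum_congr rfl fun j _ => by ring
        linarith
      have hD : star w ⬝ᵥ (DeltaMap A X) *ᵥ w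
          = ((∑ i, ∑ j, (A i j + if i = j then 1 else 0) * (p i) ^ 2 * (q j) ^ 2 : ℝ) : ℂ) := by
        have hcast : ((∑ i, ∑ j, (A i j + if i = j then 1 else 0) * (p i) ^ 2 * (q j) ^ 2 : ℝ) : ℂ)
            = ∑ i, ∑ j, (((A i j + if i = j then 1 else 0) * (p i) ^ 2 * (q j) ^ 2 : ℝ) : ℂ) := by
          simp only [Complex.ofReal_sum]
        rw [hcast]
        simp only [DeltaMap, mulVec_diagonal, dotProduct, Pi.star_apply]
        refine Finset.sum_congr rfl fun i _ => ?_
        have hw : star (w i) * w i = ((p i ^ 2 : ℝ) : ℂ) := by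
          rw [Complex.star_def, mul_comm, Complex.mul_conj, hpdef]
          norm_cast
          simp [Complex.normSq_eq_norm_sq]
        calc star (w i) * ((∑ j, ((A i j : ℂ) + if i = j then 1 else 0) * X j j) * w i)
            = (star (w i) * w i) * (∑ j, ((A i j : ℂ) + if i = j then 1 else 0) * X j j) := by
              ring
          _ = ∑ j, (((A i j + if i = j then 1 else 0) * (p i) ^ 2 * (q j) ^ 2 : ℝ) : ℂ) := by
              rw [hw, Finset.mul_sum]
              refine Finset.sum_congr rfl fun j _ => ?_
              rw [hdiag j]
              split_ifs <;> push_cast <;> ring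
      have hfinal : star w ⬝ᵥ (PhiDelta A X) *ᵥ w
          = (((∑ i, ∑ j, (A i j + if i = j then 1 else 0) * (p i) ^ 2 * (q j) ^ 2)
              - s.re : ℝ) : ℂ) := by
        rw [PhiDelta, Matrix.sub_mulVec, dotProduct_sub, hD, ← hsdef, Complex.ofReal_sub]
        conv_lhs => rw [hseq]
      rw [hfinal]
      rw [Complex.zero_le_real]
      linarith
end
end
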